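/- Fix k ≥ 0 and let ϑ_r(x;y) = ∑_{i≥0} q_{r-i}(x) e_i(y) with y = (y_1,...,y_k). For every integer m > k, ϑ_m^2 = 2 ∑_{i=1}^{m} (-1)^{i+1} ϑ_{m+i} ϑ_{m-i}. -/

import Mathlib

open PowerSeries Finset

section Aux

variable {R : Type*} [CommRing R]

private lemma myrescale_C (a b : R) : rescale a (C b) = C b := by
  ext n
  simp only [coeff_rescale, coeff_C]
  split
  · simp [*]
  · simp

private lemma coeff_one_add_mul (a : R) (f : PowerSeries R) (n : ℕ) :
    PowerSeries.coeff n ((1 + PowerSeries.C a * X) * f) =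
      PowerSeries.coeff n f + a * (if n = 0 then 0 else PowerSeries.coeff (n-1) f) := by
  cases n with
  | zero => simp [add_mul, mul_assoc, coeff_zero_X_mul]
  | succ n => simp [add_mul, mul_assoc, coeff_succ_X_mul]

private lemma coeff_prod_one_add {k : ℕ} (y : Fin k → R) (s : Finset (Fin k)) (i : ℕ) :
    PowerSeries.coeff i (∏ j ∈ s, (1 + PowerSeries.C (y j) * X)) =
      ∑ t ∈ Finset.powersetCard i s, ∏ j ∈ t, y j := by
  induction s using Finset.induction generalizing i with
  | empty =>
      cases i with
      | zero => simp
      | succ i =>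
          rw [Finset.powersetCard_eq_empty.2 (by simp)]
          simp
  | @insert a s ha ih =>
      rw [Finset.prod_insert ha, coeff_one_add_mul]
      cases i with
      | zero => simp [ih]
      | succ i =>
          rw [Finset.powersetCard_succ_insert ha, Finset.sum_union, Finset.sum_image]
          · simp only [Nat.succ_ne_zero, if_false, Nat.succ_sub_one, ih]
            congr 1
            rw [Finset.mul_sum]
            refine Finset.sum_congr rfl fun t ht => ?_
            rw [Finset.mem_powersetCard] at ht
            rw [Finset.prod_insert (fun hat => ha (ht.1 hat))]
          · intro t ht u hu htu
            rw [Finset.mem_coe, Finset.mem_powersetCard] at ht hu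
            have hat : a ∉ t := fun hh => ha (ht.1 hh)
            have hau : a ∉ u := fun hh => ha (hu.1 hh)
            rw [← Finset.erase_insert hat, ← Finset.erase_insert hau, htu]
          · rw [Finset.disjoint_right]
            rintro t ht hmem
            rw [Finset.mem_image] at ht
            obtain ⟨u, hu, rfl⟩ := ht
            rw [Finset.mem_powersetCard] at hmem
            exact ha (hmem.1 (Finset.mem_insert_self a u))

private lemma coeff_prod_vanish {k : ℕ} (z : Fin k → R) (s : Finset (Fin k)) (d : ℕ)
    (hd : 2 * s.card < d) :
    PowerSeries.coeff d (∏ j ∈ s, (1 - PowerSeries.C (z j) * X ^ 2)) = 0 := by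
  induction s using Finset.induction generalizing d with
  | empty =>
      rw [Finset.prod_empty, PowerSeries.coeff_one, if_neg (by omega)]
  | @insert a s ha ih =>
      rw [Finset.prod_insert ha]
      rw [Finset.card_insert_of_notMem ha] at hd
      obtain ⟨d', rfl⟩ : ∃ d', d = d' + 2 := ⟨d - 2, by omega⟩
      have : (1 - PowerSeries.C (z a) * X ^ 2) * ∏ j ∈ s, (1 - PowerSeries.C (z j) * X ^ 2)
          = (∏ j ∈ s, (1 - PowerSeries.C (z j) * X ^ 2))
            - PowerSeries.C (z a) * (X ^ 2 * ∏ j ∈ s, (1 - PowerSeries.C (z j) * X ^ 2)) := by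
        ring
      rw [this, map_sub, PowerSeries.coeff_C_mul, PowerSeries.coeff_X_pow_mul,
        ih _ (by omega), ih _ (by omega), mul_zero, sub_zero]

private lemma sum_split {M : Type*} [AddCommMonoid M] (f : ℕ → M) (m : ℕ) :
    ∑ i ∈ Finset.range (2 * m + 1), f i
      = (∑ j ∈ Finset.Icc 1 m, f (m - j)) + f m + ∑ j ∈ Finset.Icc 1 m, f (m + j) := by
  have hIcc : ∀ g : ℕ → M, ∑ j ∈ Finset.Icc 1 m, g j = ∑ j ∈ Finset.range m, g (1 + j) := by
    intro g
    rw [← Finset.Ico_add_one_right_eq_Icc, Finset.sum_Ico_eq_sum_range]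
    simp
  have h1 : ∑ i ∈ Finset.range (2 * m + 1), f i
      = ∑ i ∈ Finset.range m, f i + ∑ i ∈ Finset.Ico m (2 * m + 1), f i := by
    rw [Finset.range_eq_Ico, ← Finset.sum_Ico_consecutive _ (Nat.zero_le m) (by omega), Finset.range_eq_Ico]
  rw [h1, Finset.sum_Ico_eq_sum_range]
  have h2 : 2 * m + 1 - m = m + 1 := by omega
  rw [h2, Finset.sum_range_succ']
  have h3 : ∑ i ∈ Finset.range m, f i = ∑ j ∈ Finset.Icc 1 m, f (m - j) := by
    rw [hIcc, ← Finset.sum_range_reflect]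
    refine Finset.sum_congr rfl fun i hi => ?_
    rw [Finset.mem_range] at hi
    congr 1
    omega
  have h4 : ∑ i ∈ Finset.range m, f (m + (i + 1)) = ∑ j ∈ Finset.Icc 1 m, f (m + j) := by
    rw [hIcc]
    refine Finset.sum_congr rfl fun i hi => ?_
    congr 1
    omega
  rw [h3, h4]
  abel

private lemma rescale_one_sub (b : R) :
    rescale (-1 : R) (1 - C b * X) = 1 + C b * X := by
  rw [map_sub, map_one, map_mul, myrescale_C, rescale_neg_one_X]
  ring

private lemma rescale_one_add (b : R) :
    rescale (-1 : R) (1 + C b * X) = 1 - C b * X := by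
  rw [map_add, map_one, map_mul, myrescale_C, rescale_neg_one_X]
  ring

end Aux

/-- The value of the elementary symmetric polynomial `e_i(y)` in `k` variables. -/
def esymmVal {R : Type*} [CommRing R] {k : ℕ} (y : Fin k → R) (i : ℕ) : R :=
  ∑ s ∈ Finset.powersetCard i (Finset.univ : Finset (Fin k)), ∏ j ∈ s, y j

/-- `ϑ_r(x;y) = ∑_i q_{r-i}(x) e_i(y)`, where `q_j` is the `j`-th coefficient of `Q`. -/
noncomputable def thetaNat {R : Type*} [CommRing R] {k : ℕ}
    (Q : PowerSeries R) (y : Fin k → R) (r : ℕ) : R :=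
  ∑ i ∈ Finset.range (r + 1), PowerSeries.coeff (r - i) Q * esymmVal y i

/-- for `m > k`, `ϑ_m² = 2 ∑_{i=1}^m (-1)^{i+1} ϑ_{m+i} ϑ_{m-i}`. -/
theorem stmt_2 {R : Type*} [CommRing R] (n k : ℕ) (x : Fin n → R) (y : Fin k → R)
    (Q : PowerSeries R)
    (hQ : Q * ∏ i : Fin n, (1 - PowerSeries.C (x i) * PowerSeries.X) =
          ∏ i : Fin n, (1 + PowerSeries.C (x i) * PowerSeries.X))
    (m : ℕ) (hm : k < m) :
    (thetaNat Q y m) ^ 2 =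
      2 * ∑ i ∈ Finset.Icc 1 m,
        (-1 : R) ^ (i + 1) * thetaNat Q y (m + i) * thetaNat Q y (m - i) := by
  set A := ∏ i : Fin n, (1 - PowerSeries.C (x i) * X) with hA
  set B := ∏ i : Fin n, (1 + PowerSeries.C (x i) * X) with hB
  set E := ∏ j : Fin k, (1 + PowerSeries.C (y j) * X) with hE
  set F := ∏ j : Fin k, (1 - PowerSeries.C (y j) * X) with hF
  have hrA : rescale (-1 : R) A = B := by
    rw [hA, hB, map_prod]
    exact Finset.prod_congr rfl fun i _ => rescale_one_sub _
  have hrB : rescale (-1 : R) B = A := by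
    rw [hA, hB, map_prod]
    exact Finset.prod_congr rfl fun i _ => rescale_one_add _
  have hrE : rescale (-1 : R) E = F := by
    rw [hE, hF, map_prod]
    exact Finset.prod_congr rfl fun i _ => rescale_one_add _
  have hQ' : rescale (-1 : R) Q * B = A := by
    have h := congrArg (rescale (-1 : R)) hQ
    rwa [map_mul, hrA, hrB] at h
  have hUnit : IsUnit (A * B) := by
    rw [PowerSeries.isUnit_iff_constantCoeff]
    have h : constantCoeff (A * B) = 1 := by
      rw [map_mul, hA, hB, map_prod, map_prod]
      simp
    rw [h]
    exact isUnit_one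
  have hQQ : Q * rescale (-1 : R) Q = 1 := by
    refine hUnit.mul_right_cancel ?_
    have h : Q * rescale (-1 : R) Q * (A * B) = (Q * A) * (rescale (-1 : R) Q * B) := by ring
    rw [h, hQ, hQ', one_mul]
    ring
  have hEF : E * F = ∏ j : Fin k, (1 - PowerSeries.C ((y j) ^ 2) * X ^ 2) := by
    rw [hE, hF, ← Finset.prod_mul_distrib]
    refine Finset.prod_congr rfl fun j _ => ?_
    rw [map_pow]
    ring
  set g := Q * E with hg
  have hgg : g * rescale (-1 : R) g = E * F := by
    rw [hg, map_mul, hrE]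
    calc Q * E * (rescale (-1 : R) Q * F)
        = (Q * rescale (-1 : R) Q) * (E * F) := by ring
      _ = E * F := by rw [hQQ, one_mul]
  have hcoeffE : ∀ i, PowerSeries.coeff i E = esymmVal y i := fun i =>
    coeff_prod_one_add y Finset.univ i
  have hcoeffg : ∀ r, PowerSeries.coeff r g = thetaNat Q y r := by
    intro r
    rw [hg, PowerSeries.coeff_mul,
      Finset.Nat.sum_antidiagonal_eq_sum_range_succ
        (fun a b => PowerSeries.coeff a Q * PowerSeries.coeff b E) r]
    conv_lhs => rw [← Finset.sum_range_reflect]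
    rw [thetaNat]
    refine Finset.sum_congr rfl fun i hi => ?_
    rw [Finset.mem_range] at hi
    have h1 : r + 1 - 1 - i = r - i := by omega
    have h2 : r - (r - i) = i := by omega
    rw [h1, h2, hcoeffE]
  have hzero : PowerSeries.coeff (2 * m) (g * rescale (-1 : R) g) = 0 := by
    rw [hgg, hEF]
    refine coeff_prod_vanish _ _ _ ?_
    rw [Finset.card_univ, Fintype.card_fin]
    omega
  set θ : ℕ → R := thetaNat Q y with hθ
  set f : ℕ → R := fun i => (-1 : R) ^ (2 * m - i) * (θ i * θ (2 * m - i)) with hf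
  have h0 : ∑ i ∈ Finset.range (2 * m + 1), f i = 0 := by
    rw [← hzero, PowerSeries.coeff_mul,
      Finset.Nat.sum_antidiagonal_eq_sum_range_succ
        (fun a b => PowerSeries.coeff a g * PowerSeries.coeff b (rescale (-1 : R) g)) (2 * m)]
    refine Finset.sum_congr rfl fun i hi => ?_
    rw [hf]
    simp only [coeff_rescale, hcoeffg, ← hθ]
    ring
  rw [sum_split f m] at h0
  set T : R := ∑ j ∈ Finset.Icc 1 m, (-1 : R) ^ j * (θ (m + j) * θ (m - j)) with hT
  have e1 : ∑ j ∈ Finset.Icc 1 m, f (m - j) = (-1 : R) ^ m * T := by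
    rw [hT, Finset.mul_sum]
    refine Finset.sum_congr rfl fun j hj => ?_
    rw [Finset.mem_Icc] at hj
    rw [hf]
    simp only
    have h1 : 2 * m - (m - j) = m + j := by omega
    rw [h1, pow_add]
    ring
  have e2 : ∑ j ∈ Finset.Icc 1 m, f (m + j) = (-1 : R) ^ m * T := by
    rw [hT, Finset.mul_sum]
    refine Finset.sum_congr rfl fun j hj => ?_
    rw [Finset.mem_Icc] at hj
    rw [hf]
    simp only
    have h1 : 2 * m - (m + j) = m - j := by omega
    have hsg : (-1 : R) ^ (m - j) = (-1 : R) ^ m * (-1 : R) ^ j := by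
      rw [← pow_add, show m + j = (m - j) + 2 * j by omega, pow_add, pow_mul, neg_one_sq,
        one_pow, mul_one]
    rw [h1, hsg]
    ring
  have e3 : f m = (-1 : R) ^ m * (θ m * θ m) := by
    rw [hf]
    simp only
    rw [show 2 * m - m = m by omega]
  rw [e1, e2, e3] at h0
  have hsgn : (-1 : R) ^ m * (-1 : R) ^ m = 1 := by
    rw [← pow_add]
    exact Even.neg_one_pow ⟨m, rfl⟩
  have h0' : 2 * T + θ m * θ m = 0 := by
    calc 2 * T + θ m * θ m
        = (-1 : R) ^ m * ((-1 : R) ^ m * T + (-1 : R) ^ m * (θ m * θ m) + (-1 : R) ^ m * T) := by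
          rw [mul_add, mul_add, ← mul_assoc, ← mul_assoc, ← mul_assoc, hsgn]
          ring
      _ = (-1 : R) ^ m * 0 := by rw [h0]
      _ = 0 := mul_zero _
  have hgoal : ∑ i ∈ Finset.Icc 1 m, (-1 : R) ^ (i + 1) * θ (m + i) * θ (m - i) = -T := by
    rw [hT, ← Finset.sum_neg_distrib]
    refine Finset.sum_congr rfl fun i hi => ?_
    rw [pow_succ]
    ring
  rw [hgoal]
  rw [sq]
  linear_combination h0'
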